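/- For every fixed r > 0, the map c ↦ R_{c,r} is Lipschitz in operator norm with constant 1/r: for all c₁, c₂ ∈ ℝ, ‖R_{c₁,r} − R_{c₂,r}‖_op ≤ |c₁ − c₂| / r. -/
import Mathlib


noncomputable section

open MeasureTheory
open scoped RealInnerProductSpace

/-- `sinc x = sin x / x` for `x ≠ 0`, and `sinc 0 = 1`. -/
def sinc (x : ℝ) : ℝ := if x = 0 then 1 else Real.sin x / x

/-- The 2×2 rotation matrix. -/
def Rot (x : ℝ) : Matrix (Fin 2) (Fin 2) ℝ :=
  !![Real.cos x, -Real.sin x; Real.sin x, Real.cos x]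

/-- The RoPE matrix `R_t`: block diagonal with ℓ-th block `Rot (θ ℓ * t)`. -/
def RoPE {n : ℕ} (θ : Fin n → ℝ) (t : ℝ) :
    Matrix (Fin 2 × Fin n) (Fin 2 × Fin n) ℝ :=
  Matrix.blockDiagonal fun ℓ => Rot (θ ℓ * t)

/-- The interval (RoTE) matrix `R_{c,r}`: block diagonal with ℓ-th block
`sinc (θ ℓ * r) • Rot (θ ℓ * c)`. -/
def RoTE {n : ℕ} (θ : Fin n → ℝ) (c r : ℝ) :
    Matrix (Fin 2 × Fin n) (Fin 2 × Fin n) ℝ :=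
  Matrix.blockDiagonal fun ℓ => sinc (θ ℓ * r) • Rot (θ ℓ * c)

/-- The normalization constant `C_r = (1/n) ∑ ℓ, sinc (θ ℓ * r)`. -/
def Cnorm {n : ℕ} (θ : Fin n → ℝ) (r : ℝ) : ℝ :=
  (1 / (n : ℝ)) * ∑ ℓ : Fin n, sinc (θ ℓ * r)

/-- Action of a `2n × 2n` matrix on Euclidean space `ℝ^{2n}`. -/
def mApply {n : ℕ} (M : Matrix (Fin 2 × Fin n) (Fin 2 × Fin n) ℝ)
    (v : EuclideanSpace ℝ (Fin 2 × Fin n)) : EuclideanSpace ℝ (Fin 2 × Fin n) :=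
  Matrix.toEuclideanLin M v

/-- Operator norm on `ℝ^{2n×2n}` induced by the Euclidean norm on `ℝ^{2n}`. -/
def opNorm {n : ℕ} (M : Matrix (Fin 2 × Fin n) (Fin 2 × Fin n) ℝ) : ℝ :=
  ‖Matrix.toEuclideanCLM (𝕜 := ℝ) M‖

/-- for fixed `r > 0`, `c ↦ R_{c,r}` is Lipschitz in operator norm with
constant `1/r`. -/
lemma sinc_sq_mul_sq_le (r : ℝ) (hr : 0 < r) (t : ℝ) :
    sinc (t * r) ^ 2 * t ^ 2 ≤ 1 / r ^ 2 := by
  by_cases ht : t = 0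
  · simp [ht]; positivity
  · have htr : t * r ≠ 0 := mul_ne_zero ht hr.ne'
    rw [sinc, if_neg htr]
    have h1 : Real.sin (t * r) ^ 2 ≤ 1 := Real.sin_sq_le_one _
    have ht2 : (0:ℝ) < t ^ 2 := by positivity
    have hr2 : (0:ℝ) < r ^ 2 := by positivity
    rw [div_pow, div_mul_eq_mul_div, div_le_div_iff₀ (by positivity) hr2]
    nlinarith [mul_le_mul_of_nonneg_right h1 (le_of_lt (mul_pos ht2 hr2))]

/-- for fixed `r > 0`, `c ↦ R_{c,r}` is Lipschitz in operator norm with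
constant `1/r`. -/
theorem rote_lipschitz_center (n : ℕ) (hn : 1 ≤ n) (θ : Fin n → ℝ)
    (r : ℝ) (hr : 0 < r) (c₁ c₂ : ℝ) :
    opNorm (RoTE θ c₁ r - RoTE θ c₂ r) ≤ |c₁ - c₂| / r := by
  have hK : (0:ℝ) ≤ |c₁ - c₂| / r := div_nonneg (abs_nonneg _) hr.le
  refine ContinuousLinearMap.opNorm_le_bound _ hK fun v => ?_
  set K : ℝ := |c₁ - c₂| / r with hKdef
  set s : Fin n → ℝ := fun ℓ => sinc (θ ℓ * r) with hs
  set p : Fin n → ℝ := fun ℓ => s ℓ * (Real.cos (θ ℓ * c₁) - Real.cos (θ ℓ * c₂)) with hp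
  set q : Fin n → ℝ := fun ℓ => s ℓ * (Real.sin (θ ℓ * c₁) - Real.sin (θ ℓ * c₂)) with hq
  have key : ∀ ℓ : Fin n, p ℓ ^ 2 + q ℓ ^ 2 ≤ K ^ 2 := by
    intro ℓ
    have h1 : p ℓ ^ 2 + q ℓ ^ 2 =
        s ℓ ^ 2 * (2 - 2 * Real.cos (θ ℓ * c₁ - θ ℓ * c₂)) := by
      simp only [hp, hq, Real.cos_sub]
      have := Real.sin_sq_add_cos_sq (θ ℓ * c₁)
      have := Real.sin_sq_add_cos_sq (θ ℓ * c₂)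
      nlinarith
    have h2 : 2 - 2 * Real.cos (θ ℓ * c₁ - θ ℓ * c₂) ≤ (θ ℓ) ^ 2 * (c₁ - c₂) ^ 2 := by
      have := Real.one_sub_sq_div_two_le_cos (x := θ ℓ * c₁ - θ ℓ * c₂)
      nlinarith
    have h3 : s ℓ ^ 2 * ((θ ℓ) ^ 2 * (c₁ - c₂) ^ 2) ≤ 1 / r ^ 2 * (c₁ - c₂) ^ 2 := by
      have := sinc_sq_mul_sq_le r hr (θ ℓ)
      nlinarith [sq_nonneg (c₁ - c₂)]
    have hKsq : K ^ 2 = 1 / r ^ 2 * (c₁ - c₂) ^ 2 := by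
      rw [hKdef, div_pow, sq_abs]; ring
    have hs2 : (0:ℝ) ≤ s ℓ ^ 2 := sq_nonneg _
    calc p ℓ ^ 2 + q ℓ ^ 2 = s ℓ ^ 2 * (2 - 2 * Real.cos (θ ℓ * c₁ - θ ℓ * c₂)) := h1
      _ ≤ s ℓ ^ 2 * ((θ ℓ) ^ 2 * (c₁ - c₂) ^ 2) := by nlinarith
      _ ≤ 1 / r ^ 2 * (c₁ - c₂) ^ 2 := h3
      _ = K ^ 2 := hKsq.symm
  set M := RoTE θ c₁ r - RoTE θ c₂ r with hM
  set w : EuclideanSpace ℝ (Fin 2 × Fin n) := (Matrix.toEuclideanCLM (𝕜 := ℝ) M) v with hw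
  have hMB : M = Matrix.blockDiagonal fun ℓ =>
      sinc (θ ℓ * r) • Rot (θ ℓ * c₁) - sinc (θ ℓ * r) • Rot (θ ℓ * c₂) := by
    rw [hM, RoTE, RoTE, ← Matrix.blockDiagonal_sub]
    rfl
  have hw0 : ∀ ℓ : Fin n, w (0, ℓ) = p ℓ * v (0, ℓ) - q ℓ * v (1, ℓ) := by
    intro ℓ
    show M.mulVec (fun j => v j) (0, ℓ) = _
    rw [hMB]
    simp only [Matrix.mulVec, dotProduct, Fintype.sum_prod_type_right,
      Matrix.blockDiagonal_apply, ite_mul, zero_mul, Finset.sum_add_distrib, Finset.sum_ite_eq,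
      Finset.mem_univ, if_true, Fin.sum_univ_two]
    simp [Rot, hp, hq, hs]
    ring
  have hw1 : ∀ ℓ : Fin n, w (1, ℓ) = q ℓ * v (0, ℓ) + p ℓ * v (1, ℓ) := by
    intro ℓ
    show M.mulVec (fun j => v j) (1, ℓ) = _
    rw [hMB]
    simp only [Matrix.mulVec, dotProduct, Fintype.sum_prod_type_right,
      Matrix.blockDiagonal_apply, ite_mul, zero_mul, Finset.sum_add_distrib, Finset.sum_ite_eq,
      Finset.mem_univ, if_true, Fin.sum_univ_two]
    simp [Rot, hp, hq, hs]
    ring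
  have hsum : ∑ i : Fin 2 × Fin n, ‖w i‖ ^ 2 ≤ K ^ 2 * ∑ i : Fin 2 × Fin n, ‖v i‖ ^ 2 := by
    rw [Fintype.sum_prod_type_right, Fintype.sum_prod_type_right, Finset.mul_sum]
    refine Finset.sum_le_sum fun ℓ _ => ?_
    rw [Fin.sum_univ_two, Fin.sum_univ_two, Real.norm_eq_abs, Real.norm_eq_abs,
      Real.norm_eq_abs, Real.norm_eq_abs, sq_abs, sq_abs, sq_abs, sq_abs,
      hw0 ℓ, hw1 ℓ]
    have h := mul_le_mul_of_nonneg_right (key ℓ)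
      (show (0:ℝ) ≤ v (0, ℓ) ^ 2 + v (1, ℓ) ^ 2 by positivity)
    nlinarith [h]
  have hnw : ‖w‖ ≤ K * ‖v‖ := by
    rw [EuclideanSpace.norm_eq, EuclideanSpace.norm_eq]
    have h1 : ∀ x : ℝ, ‖x‖ ^ 2 = x ^ 2 := fun x => by rw [Real.norm_eq_abs, sq_abs]
    calc Real.sqrt (∑ i, ‖w i‖ ^ 2) ≤ Real.sqrt (K ^ 2 * ∑ i, ‖v i‖ ^ 2) :=
          Real.sqrt_le_sqrt hsum
      _ = K * Real.sqrt (∑ i, ‖v i‖ ^ 2) := by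
          rw [Real.sqrt_mul (sq_nonneg K), Real.sqrt_sq hK]
  exact hnw
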